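/- Let T be the tree with edges {u1u3, u2u3, u3u4, u4u5, u3u'3, u'3u''3, u''3v3, u''3v'3} (so u3 has neighbors u1,u2,u4,u'3; u4 has neighbor u5; u'3 has neighbor u''3; and u''3 has additional neighbors v3, v'3). If L is a list assignment with |L(u1)| ≥ 3, |L(u2)| ≥ 2, |L(u3)| ≥ 4, |L(u4)| ≥ 5, |L(u5)| ≥ 2, |L(u'3)| ≥ 6, |L(u''3)| ≥ 4, |L(v3)| ≥ 3, |L(v'3)| ≥ 2, then T admits a 2-distance L-coloring. -/

import Mathlib

/-- The tree of the corresponding configuration, with vertices 0 = u1, 1 = u2, 2 = u3, 3 = u4, 4 = u5, 5 = u'3, 6 = u''3, 7 = v3, 8 = v'3. -/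
def T7 : SimpleGraph (Fin 9) :=
  SimpleGraph.fromRel (fun u v => (u = 0 ∧ v = 2) ∨ (u = 1 ∧ v = 2) ∨ (u = 2 ∧ v = 3) ∨ (u = 3 ∧ v = 4) ∨ (u = 2 ∧ v = 5) ∨ (u = 5 ∧ v = 6) ∨ (u = 6 ∧ v = 7) ∨ (u = 6 ∧ v = 8))

instance T7.adjDecidable : DecidableRel T7.Adj := fun u v =>
  decidable_of_iff' _ (SimpleGraph.fromRel_adj _ u v)

set_option maxRecDepth 40000 in
set_option synthInstance.maxSize 4000 in
set_option synthInstance.maxHeartbeats 1000000 in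
lemma T7_pairs : ∀ u v : Fin 9, u ≠ v →
    (T7.Adj u v ∨ ∃ w, T7.Adj u w ∧ T7.Adj w v) →
    ((u = 0 ∧ v = 1) ∨ (u = 1 ∧ v = 0) ∨ (u = 0 ∧ v = 2) ∨ (u = 2 ∧ v = 0) ∨ (u = 0 ∧ v = 3) ∨ (u = 3 ∧ v = 0) ∨ (u = 0 ∧ v = 5) ∨ (u = 5 ∧ v = 0) ∨ (u = 1 ∧ v = 2) ∨ (u = 2 ∧ v = 1) ∨ (u = 1 ∧ v = 3) ∨ (u = 3 ∧ v = 1) ∨ (u = 1 ∧ v = 5) ∨ (u = 5 ∧ v = 1) ∨ (u = 2 ∧ v = 3) ∨ (u = 3 ∧ v = 2) ∨ (u = 2 ∧ v = 4) ∨ (u = 4 ∧ v = 2) ∨ (u = 2 ∧ v = 5) ∨ (u = 5 ∧ v = 2) ∨ (u = 2 ∧ v = 6) ∨ (u = 6 ∧ v = 2) ∨ (u = 3 ∧ v = 4) ∨ (u = 4 ∧ v = 3) ∨ (u = 3 ∧ v = 5) ∨ (u = 5 ∧ v = 3) ∨ (u = 5 ∧ v = 6) ∨ (u = 6 ∧ v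 = 5) ∨ (u = 5 ∧ v = 7) ∨ (u = 7 ∧ v = 5) ∨ (u = 5 ∧ v = 8) ∨ (u = 8 ∧ v = 5) ∨ (u = 6 ∧ v = 7) ∨ (u = 7 ∧ v = 6) ∨ (u = 6 ∧ v = 8) ∨ (u = 8 ∧ v = 6) ∨ (u = 7 ∧ v = 8) ∨ (u = 8 ∧ v = 7)) := by decide

/-- An explicit function on `Fin 9` given by nine values. -/
def vec9 (c0 c1 c2 c3 c4 c5 c6 c7 c8 : ℕ) : Fin 9 → ℕ := fun v =>
  match v with
  | ⟨0, _⟩ => c0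
  | ⟨1, _⟩ => c1
  | ⟨2, _⟩ => c2
  | ⟨3, _⟩ => c3
  | ⟨4, _⟩ => c4
  | ⟨5, _⟩ => c5
  | ⟨6, _⟩ => c6
  | ⟨7, _⟩ => c7
  | ⟨8, _⟩ => c8

lemma pick_avoid (s t : Finset ℕ) (h : t.card < s.card) : ∃ a ∈ s, a ∉ t := by
  by_contra hc
  push_neg at hc
  exact absurd (Finset.card_le_card hc) (not_le.mpr h)

lemma pick0 (s : Finset ℕ) (h : 1 ≤ s.card) : ∃ y, y ∈ s :=
  Finset.card_pos.mp h

lemma pick1 (s : Finset ℕ) (h : 2 ≤ s.card) (a : ℕ) : ∃ y ∈ s, y ≠ a := by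
  obtain ⟨y, hy, hyn⟩ := pick_avoid s {a} (by rw [Finset.card_singleton]; omega)
  exact ⟨y, hy, by simpa using hyn⟩

lemma pick2 (s : Finset ℕ) (h : 3 ≤ s.card) (a b : ℕ) : ∃ y ∈ s, y ≠ a ∧ y ≠ b := by
  obtain ⟨y, hy, hyn⟩ := pick_avoid s {a, b} (by
    have h1 := Finset.card_insert_le a ({b} : Finset ℕ)
    rw [Finset.card_singleton] at h1
    omega)
  refine ⟨y, hy, ?_⟩
  simpa [not_or] using hyn

lemma pick3 (s : Finset ℕ) (h : 4 ≤ s.card) (a b c : ℕ) : ∃ y ∈ s, y ≠ a ∧ y ≠ b ∧ y ≠ c := by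
  obtain ⟨y, hy, hyn⟩ := pick_avoid s {a, b, c} (by
    have h1 := Finset.card_insert_le b ({c} : Finset ℕ)
    have h2 := Finset.card_insert_le a ({b, c} : Finset ℕ)
    rw [Finset.card_singleton] at h1
    omega)
  refine ⟨y, hy, ?_⟩
  simpa [not_or] using hyn

lemma card_sdiff_ge (s t : Finset ℕ) : s.card - t.card ≤ (s \ t).card := by
  have h1 : s ⊆ s \ t ∪ t := by
    intro a ha
    by_cases h : a ∈ t
    · exact Finset.mem_union_right _ h
    · exact Finset.mem_union_left _ (Finset.mem_sdiff.mpr ⟨ha, h⟩)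
  have h2 := Finset.card_le_card h1
  have h3 := Finset.card_union_le (s \ t) t
  omega

/-- Coloring the clique `{u1, u2, u3, u4}` together with the pendant vertex `u5`:
`A0, A1, A2, A3` are the residual lists of `u1, u2, u3, u4` and `B` is the list of `u5`. -/
lemma clique_lemma (A0 A1 A2 A3 B : Finset ℕ) (x : ℕ)
    (hx : x ∈ A0) (hA0 : 2 ≤ A0.card) (hA1 : 2 ≤ (A1 \ {x}).card)
    (hA2 : 2 ≤ A2.card) (hA3 : 4 ≤ A3.card) (hB : 2 ≤ B.card) :
    ∃ c0 c1 c2 c3 c4, c0 ∈ A0 ∧ c1 ∈ A1 ∧ c2 ∈ A2 ∧ c3 ∈ A3 ∧ c4 ∈ B ∧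
      c0 ≠ c1 ∧ c0 ≠ c2 ∧ c0 ≠ c3 ∧ c1 ≠ c2 ∧ c1 ≠ c3 ∧ c2 ≠ c3 ∧ c2 ≠ c4 ∧ c3 ≠ c4 := by
  by_cases hP : ∃ c, c ∈ A2 ∧ c ∉ B
  · obtain ⟨c2, hc2A, hc2B⟩ := hP
    by_cases hxc : c2 = x
    · subst hxc
      obtain ⟨c0, hc0A, hc0x⟩ := pick1 A0 hA0 c2
      obtain ⟨c1, hc1m, hc1c0⟩ := pick1 _ hA1 c0
      rw [Finset.mem_sdiff, Finset.mem_singleton] at hc1m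
      obtain ⟨hc1A, hc1x⟩ := hc1m
      obtain ⟨c3, hc3A, h3a, h3b, h3c⟩ := pick3 A3 hA3 c0 c1 c2
      obtain ⟨c4, hc4B, hc4c3⟩ := pick1 B hB c3
      exact ⟨c0, c1, c2, c3, c4, hc0A, hc1A, hc2A, hc3A, hc4B,
        hc1c0.symm, hc0x, h3a.symm, hc1x, h3b.symm, h3c.symm,
        fun h => hc2B (h ▸ hc4B), hc4c3.symm⟩
    · obtain ⟨c1, hc1m, hc1c2⟩ := pick1 _ hA1 c2
      rw [Finset.mem_sdiff, Finset.mem_singleton] at hc1m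
      obtain ⟨hc1A, hc1x⟩ := hc1m
      obtain ⟨c3, hc3A, h3x, h3c1, h3c2⟩ := pick3 A3 hA3 x c1 c2
      obtain ⟨c4, hc4B, hc4c3⟩ := pick1 B hB c3
      exact ⟨x, c1, c2, c3, c4, hx, hc1A, hc2A, hc3A, hc4B,
        Ne.symm hc1x, fun h => hxc h.symm, h3x.symm, hc1c2, h3c1.symm, h3c2.symm,
        fun h => hc2B (h ▸ hc4B), hc4c3.symm⟩
  · push_neg at hP
    have hA2B : A2 ⊆ B := hP
    by_cases hB3 : 3 ≤ B.card
    · obtain ⟨c2, hc2A, hc2x⟩ := pick1 A2 hA2 x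
      obtain ⟨c1, hc1m, hc1c2⟩ := pick1 _ hA1 c2
      rw [Finset.mem_sdiff, Finset.mem_singleton] at hc1m
      obtain ⟨hc1A, hc1x⟩ := hc1m
      obtain ⟨c3, hc3A, h3x, h3c1, h3c2⟩ := pick3 A3 hA3 x c1 c2
      obtain ⟨c4, hc4B, h4c2, h4c3⟩ := pick2 B hB3 c2 c3
      exact ⟨x, c1, c2, c3, c4, hx, hc1A, hc2A, hc3A, hc4B,
        Ne.symm hc1x, hc2x.symm, h3x.symm, hc1c2, h3c1.symm, h3c2.symm,
        h4c2.symm, h4c3.symm⟩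
    · have hBcard : B.card = 2 := by omega
      have hA2eq : A2 = B :=
        Finset.eq_of_subset_of_card_le hA2B (by omega)
      obtain ⟨p, q, hpq, hBpq⟩ := Finset.card_eq_two.mp hBcard
      have hpB : p ∈ B := by rw [hBpq]; simp
      have hqB : q ∈ B := by rw [hBpq]; simp
      by_cases hxB : x ∈ B
      · have hxpq : x = p ∨ x = q := by rw [hBpq] at hxB; simpa using hxB
        obtain ⟨o, hoB, hox⟩ : ∃ o, o ∈ B ∧ o ≠ x := by
          rcases hxpq with h | h
          · exact ⟨q, hqB, by rw [h]; exact fun hh => hpq hh.symm⟩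
          · exact ⟨p, hpB, by rw [h]; exact hpq⟩
        have hoA2 : o ∈ A2 := by rw [hA2eq]; exact hoB
        obtain ⟨c1, hc1m, hc1o⟩ := pick1 _ hA1 o
        rw [Finset.mem_sdiff, Finset.mem_singleton] at hc1m
        obtain ⟨hc1A, hc1x⟩ := hc1m
        obtain ⟨c3, hc3A, h3x, h3o, h3c1⟩ := pick3 A3 hA3 x o c1
        exact ⟨x, c1, o, c3, x, hx, hc1A, hoA2, hc3A, hxB,
          Ne.symm hc1x, hox.symm, h3x.symm, hc1o, h3c1.symm, h3o.symm,
          hox, h3x⟩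
      · have hxp : x ≠ p := fun h => hxB (h ▸ hpB)
        have hxq : x ≠ q := fun h => hxB (h ▸ hqB)
        by_cases hA1B : ∃ c, c ∈ A1 \ {x} ∧ c ∉ B
        · obtain ⟨c1, hc1m, hc1B⟩ := hA1B
          rw [Finset.mem_sdiff, Finset.mem_singleton] at hc1m
          obtain ⟨hc1A, hc1x⟩ := hc1m
          have hc1p : c1 ≠ p := fun h => hc1B (h ▸ hpB)
          have hc1q : c1 ≠ q := fun h => hc1B (h ▸ hqB)
          have hpA2 : p ∈ A2 := by rw [hA2eq]; exact hpB
          by_cases hrest : ∃ c, c ∈ A3 ∧ c ≠ x ∧ c ≠ c1 ∧ c ∉ B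
          · obtain ⟨c3, hc3A, h3x, h3c1, h3B⟩ := hrest
            have h3p : c3 ≠ p := fun h => h3B (h ▸ hpB)
            have h3q : c3 ≠ q := fun h => h3B (h ▸ hqB)
            exact ⟨x, c1, p, c3, q, hx, hc1A, hpA2, hc3A, hqB,
              Ne.symm hc1x, hxp, h3x.symm, hc1p, h3c1.symm, h3p.symm, hpq, h3q⟩
          · push_neg at hrest
            have hsub : A3 ⊆ insert x (insert c1 B) := by
              intro a ha
              simp only [Finset.mem_insert]
              by_cases h1 : a = x
              · exact Or.inl h1
              by_cases h2 : a = c1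
              · exact Or.inr (Or.inl h2)
              · exact Or.inr (Or.inr (hrest a ha h1 h2))
            have hc1A3 : c1 ∈ A3 := by
              have hcard1 := Finset.card_insert_le c1 B
              have hcard2 := Finset.card_insert_le x (insert c1 B)
              have hA3eq := Finset.eq_of_subset_of_card_le hsub (by omega)
              rw [hA3eq]; simp
            obtain ⟨c1', hc1'm, hc1'c1⟩ := pick1 _ hA1 c1
            rw [Finset.mem_sdiff, Finset.mem_singleton] at hc1'm
            obtain ⟨hc1'A, hc1'x⟩ := hc1'm
            by_cases hc1'B : c1' ∈ B
            · have hc1'pq : c1' = p ∨ c1' = q := by rw [hBpq] at hc1'B; simpa using hc1'B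
              obtain ⟨o, hoB, hoc1'⟩ : ∃ o, o ∈ B ∧ o ≠ c1' := by
                rcases hc1'pq with h | h
                · exact ⟨q, hqB, by rw [h]; exact fun hh => hpq hh.symm⟩
                · exact ⟨p, hpB, by rw [h]; exact hpq⟩
              have hoA2 : o ∈ A2 := by rw [hA2eq]; exact hoB
              have hxo : x ≠ o := fun h => hxB (h ▸ hoB)
              have hc1o : c1 ≠ o := fun h => hc1B (h ▸ hoB)
              exact ⟨x, c1', o, c1, c1', hx, hc1'A, hoA2, hc1A3, hc1'B,
                Ne.symm hc1'x, hxo, Ne.symm hc1x, hoc1'.symm, hc1'c1, hc1o.symm,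
                hoc1', hc1'c1.symm⟩
            · have hc1'p : c1' ≠ p := fun h => hc1'B (h ▸ hpB)
              exact ⟨x, c1', p, c1, q, hx, hc1'A, hpA2, hc1A3, hqB,
                Ne.symm hc1'x, hxp, Ne.symm hc1x, hc1'p, hc1'c1, hc1p.symm, hpq, hc1q⟩
        · push_neg at hA1B
          have hsub : A1 \ {x} ⊆ B := hA1B
          have heq : A1 \ {x} = B :=
            Finset.eq_of_subset_of_card_le hsub (by omega)
          have hpA1 : p ∈ A1 := by
            have hp' : p ∈ A1 \ {x} := by rw [heq]; exact hpB
            exact (Finset.mem_sdiff.mp hp').1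
          have hqA2 : q ∈ A2 := by rw [hA2eq]; exact hqB
          obtain ⟨c3, hc3A, h3x, h3p, h3q⟩ := pick3 A3 hA3 x p q
          exact ⟨x, p, q, c3, p, hx, hpA1, hqA2, hc3A, hpB,
            hxp, hxq, h3x.symm, hpq, h3p.symm, h3q.symm, hpq.symm, h3p⟩

/-- The configuration admits a 2-distance coloring from the given lists. -/
theorem colorable_iii (L : Fin 9 → Finset ℕ)
    (h0 : 3 ≤ (L 0).card)
    (h1 : 2 ≤ (L 1).card)
    (h2 : 4 ≤ (L 2).card)
    (h3 : 5 ≤ (L 3).card)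
    (h4 : 2 ≤ (L 4).card)
    (h5 : 6 ≤ (L 5).card)
    (h6 : 4 ≤ (L 6).card)
    (h7 : 3 ≤ (L 7).card)
    (h8 : 2 ≤ (L 8).card) :
    ∃ φ : Fin 9 → ℕ, (∀ v, φ v ∈ L v) ∧
      ∀ u v : Fin 9, u ≠ v →
        (T7.Adj u v ∨ ∃ w, T7.Adj u w ∧ T7.Adj w v) → φ u ≠ φ v := by
  obtain ⟨c8, hc8L⟩ := pick0 (L 8) (by omega)
  obtain ⟨c7, hc7L, n78⟩ := pick1 (L 7) (by omega) c8
  have hkey : ∃ c5 x, c5 ∈ L 5 ∧ c5 ≠ c7 ∧ c5 ≠ c8 ∧ x ∈ L 0 ∧ x ≠ c5 ∧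
      2 ≤ ((L 1 \ {c5}) \ {x}).card := by
    rcases Nat.lt_or_ge (L 1).card 4 with hlt | hge
    · rcases Nat.lt_or_ge (L 1).card 3 with hlt2 | hge3
      · obtain ⟨a, haL0, haL1⟩ := pick_avoid (L 0) (L 1) (by omega)
        obtain ⟨c5, hc5, hc5n⟩ := pick_avoid (L 5) (insert a (insert c7 (insert c8 (L 1)))) (by
          have ha1 := Finset.card_insert_le c8 (L 1)
          have ha2 := Finset.card_insert_le c7 (insert c8 (L 1))
          have ha3 := Finset.card_insert_le a (insert c7 (insert c8 (L 1)))
          omega)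
        simp only [Finset.mem_insert, not_or] at hc5n
        obtain ⟨hc5a, hc5c7, hc5c8, hc5L1⟩ := hc5n
        refine ⟨c5, a, hc5, hc5c7, hc5c8, haL0, fun h => hc5a h.symm, ?_⟩
        rw [(Finset.sdiff_singleton_eq_erase _ _).trans (Finset.erase_eq_of_notMem hc5L1), (Finset.sdiff_singleton_eq_erase _ _).trans (Finset.erase_eq_of_notMem haL1)]
        omega
      · obtain ⟨c5, hc5, hc5n⟩ := pick_avoid (L 5) (insert c7 (insert c8 (L 1))) (by
          have ha1 := Finset.card_insert_le c8 (L 1)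
          have ha2 := Finset.card_insert_le c7 (insert c8 (L 1))
          omega)
        simp only [Finset.mem_insert, not_or] at hc5n
        obtain ⟨hc5c7, hc5c8, hc5L1⟩ := hc5n
        obtain ⟨x, hxL0, hxc5⟩ := pick1 (L 0) (by omega) c5
        refine ⟨c5, x, hc5, hc5c7, hc5c8, hxL0, hxc5, ?_⟩
        rw [(Finset.sdiff_singleton_eq_erase _ _).trans (Finset.erase_eq_of_notMem hc5L1)]
        have hh := card_sdiff_ge (L 1) {x}
        rw [Finset.card_singleton] at hh
        omega
    · obtain ⟨c5, hc5, hc5c7, hc5c8⟩ := pick2 (L 5) (by omega) c7 c8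
      obtain ⟨x, hxL0, hxc5⟩ := pick1 (L 0) (by omega) c5
      refine ⟨c5, x, hc5, hc5c7, hc5c8, hxL0, hxc5, ?_⟩
      have hh1 := card_sdiff_ge (L 1) {c5}
      have hh2 := card_sdiff_ge (L 1 \ {c5}) {x}
      rw [Finset.card_singleton] at hh1 hh2
      omega
  obtain ⟨c5, x, hc5L, n57, n58, hxL0, hxc5, hA1card⟩ := hkey
  obtain ⟨c6, hc6L, n65, n67, n68⟩ := pick3 (L 6) h6 c5 c7 c8
  have n56 : c5 ≠ c6 := n65.symm
  have hx' : x ∈ L 0 \ {c5} := Finset.mem_sdiff.mpr ⟨hxL0, by simpa using hxc5⟩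
  have hA0card : 2 ≤ (L 0 \ {c5}).card := by
    have hh := card_sdiff_ge (L 0) {c5}
    rw [Finset.card_singleton] at hh
    omega
  have hA2card : 2 ≤ (L 2 \ {c5, c6}).card := by
    have hh := card_sdiff_ge (L 2) {c5, c6}
    have hh2 := Finset.card_insert_le c5 ({c6} : Finset ℕ)
    rw [Finset.card_singleton] at hh2
    omega
  have hA3card : 4 ≤ (L 3 \ {c5}).card := by
    have hh := card_sdiff_ge (L 3) {c5}
    rw [Finset.card_singleton] at hh
    omega
  obtain ⟨c0, c1, c2, c3, c4, hc0m, hc1m, hc2m, hc3m, hc4L,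
      n01, n02, n03, n12, n13, n23, n24, n34⟩ :=
    clique_lemma (L 0 \ {c5}) (L 1 \ {c5}) (L 2 \ {c5, c6}) (L 3 \ {c5}) (L 4) x
      hx' hA0card hA1card hA2card hA3card h4
  rw [Finset.mem_sdiff, Finset.mem_singleton] at hc0m hc1m hc3m
  obtain ⟨hc0L, n05⟩ := hc0m
  obtain ⟨hc1L, n15⟩ := hc1m
  obtain ⟨hc3L, n35⟩ := hc3m
  rw [Finset.mem_sdiff] at hc2m
  obtain ⟨hc2L, hc2n⟩ := hc2m
  simp only [Finset.mem_insert, Finset.mem_singleton, not_or] at hc2n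
  obtain ⟨n25, n26⟩ := hc2n
  refine ⟨vec9 c0 c1 c2 c3 c4 c5 c6 c7 c8, ?_, ?_⟩
  · intro v
    fin_cases v
    · exact hc0L
    · exact hc1L
    · exact hc2L
    · exact hc3L
    · exact hc4L
    · exact hc5L
    · exact hc6L
    · exact hc7L
    · exact hc8L
  intro u v huv hadj
  rcases T7_pairs u v huv hadj with (⟨rfl, rfl⟩|⟨rfl, rfl⟩|⟨rfl, rfl⟩|⟨rfl, rfl⟩|⟨rfl, rfl⟩|⟨rfl, rfl⟩|⟨rfl, rfl⟩|⟨rfl, rfl⟩|⟨rfl, rfl⟩|⟨rfl, rfl⟩|⟨rfl, rfl⟩|⟨rfl, rfl⟩|⟨rfl, rfl⟩|⟨rfl, rfl⟩|⟨rfl, rfl⟩|⟨rfl, rfl⟩|⟨rfl, rfl⟩|⟨rfl, rfl⟩|⟨rfl, rfl⟩|⟨rfl, rfl⟩|⟨rfl, rfl⟩|⟨rfl, rfl⟩|⟨rfl, rfl⟩|⟨rfl, rfl⟩|⟨rfl, rfl⟩|⟨rfl, rfl⟩|⟨rfl, rfl⟩|⟨rfl, rfl⟩|⟨rfl, rfl⟩|⟨rfl,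 rfl⟩|⟨rfl, rfl⟩|⟨rfl, rfl⟩|⟨rfl, rfl⟩|⟨rfl, rfl⟩|⟨rfl, rfl⟩|⟨rfl, rfl⟩|⟨rfl, rfl⟩|⟨rfl, rfl⟩)
  · exact n01
  · exact Ne.symm n01
  · exact n02
  · exact Ne.symm n02
  · exact n03
  · exact Ne.symm n03
  · exact n05
  · exact Ne.symm n05
  · exact n12
  · exact Ne.symm n12
  · exact n13
  · exact Ne.symm n13
  · exact n15
  · exact Ne.symm n15
  · exact n23
  · exact Ne.symm n23
  · exact n24
  · exact Ne.symm n24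
  · exact n25
  · exact Ne.symm n25
  · exact n26
  · exact Ne.symm n26
  · exact n34
  · exact Ne.symm n34
  · exact n35
  · exact Ne.symm n35
  · exact n56
  · exact Ne.symm n56
  · exact n57
  · exact Ne.symm n57
  · exact n58
  · exact Ne.symm n58
  · exact n67
  · exact Ne.symm n67
  · exact n68
  · exact Ne.symm n68
  · exact n78
  · exact Ne.symm n78
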